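/- With J(u,x_k) = λ_2(u)·t(u,x_k)·∏_{ℓ=1}^n h(u,x_ℓ) + (−1)^{n−1}·λ_1(u)·t(x_k,u)·∏_{ℓ=1}^n h(x_ℓ,u), one has, for each k, the identity J(u_j,x_k) = (c / ∏_{ℓ=1}^n g(u_j,x_ℓ)) · ∂τ(u_j|x̄)/∂x_k, where τ(u|x̄) = λ_1(u)·∏_ℓ f(x_ℓ,u) + λ_2(u)·∏_ℓ f(u,x_ℓ) and λ_1, λ_2 are treated as constants in the differentiation. -/
import Mathlib


open Finset

/-- With `J(u,x_k) = λ₂(u)·t(u,x_k)·∏ₗ h(u,x_ℓ) + (−1)^{n−1}·λ₁(u)·t(x_k,u)·∏ₗ h(x_ℓ,u)`,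
one has `J(u_j,x_k) = (c / ∏ₗ g(u_j,x_ℓ)) · ∂τ(u_j|x̄)/∂x_k`, where
`τ(u|x̄) = λ₁(u)·∏ₗ f(x_ℓ,u) + λ₂(u)·∏ₗ f(u,x_ℓ)` and `λ₁, λ₂` are constants
in the differentiation.  Here `g(u,v) = c/(u-v)`, `h(u,v) = (u-v+c)/c`,
`t(u,v) = c²/((u-v)(u-v+c))`, `f(u,v) = (u-v+c)/(u-v)`. -/
theorem J_eq_deriv_tau (c : ℂ) (hc : c ≠ 0) (n : ℕ) (x : Fin n → ℂ)
    (hx : Function.Injective x) (uj : ℂ)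
    (hux : ∀ ℓ, uj ≠ x ℓ)
    (hdiff : ∀ ℓ, uj - x ℓ ≠ c ∧ uj - x ℓ ≠ -c)
    (l1 l2 : ℂ) (k : Fin n) :
    l2 * (c ^ 2 / ((uj - x k) * (uj - x k + c))) * ∏ ℓ, ((uj - x ℓ + c) / c)
      + (-1 : ℂ) ^ (n - 1) * l1 * (c ^ 2 / ((x k - uj) * (x k - uj + c)))
          * ∏ ℓ, ((x ℓ - uj + c) / c)
    = (c / ∏ ℓ, (c / (uj - x ℓ))) *
      deriv (fun w : ℂ =>
        l1 * ∏ ℓ, ((Function.update x k w ℓ - uj + c) / (Function.update x k w ℓ - uj))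
        + l2 * ∏ ℓ, ((uj - Function.update x k w ℓ + c) / (uj - Function.update x k w ℓ)))
        (x k) := by
  classical
  have hne : ∀ ℓ, uj - x ℓ ≠ 0 := fun ℓ => sub_ne_zero.mpr (hux ℓ)
  have hne' : ∀ ℓ, x ℓ - uj ≠ 0 := fun ℓ => sub_ne_zero.mpr fun h => hux ℓ h.symm
  have hpc : ∀ ℓ, uj - x ℓ + c ≠ 0 := fun ℓ h =>
    (hdiff ℓ).2 (eq_neg_of_add_eq_zero_left h)
  have hmc : ∀ ℓ, x ℓ - uj + c ≠ 0 := fun ℓ h => by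
    have h' : x ℓ - uj = -c := eq_neg_of_add_eq_zero_left h
    exact (hdiff ℓ).1 (by linear_combination -h')
  set A := ∏ ℓ ∈ univ.erase k, (uj - x ℓ + c) with hAdef
  set B := ∏ ℓ ∈ univ.erase k, (x ℓ - uj + c) with hBdef
  set D := ∏ ℓ ∈ univ.erase k, (uj - x ℓ) with hDdef
  set E := ∏ ℓ ∈ univ.erase k, (x ℓ - uj) with hEdef
  set s : ℂ := (-1 : ℂ) ^ (n - 1) with hsdef
  have hD0 : D ≠ 0 := Finset.prod_ne_zero_iff.mpr fun ℓ _ => hne ℓ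
  have hE0 : E ≠ 0 := Finset.prod_ne_zero_iff.mpr fun ℓ _ => hne' ℓ
  have hcn : (c : ℂ) ^ n ≠ 0 := pow_ne_zero _ hc
  -- derivative computation
  have hA : HasDerivAt (fun w : ℂ => (w - uj + c) / (w - uj))
      ((1 * (x k - uj) - (x k - uj + c) * 1) / (x k - uj) ^ 2) (x k) := by
    have h1 : HasDerivAt (fun w : ℂ => w - uj + c) 1 (x k) :=
      ((hasDerivAt_id (x k)).sub_const uj).add_const c
    have h2 : HasDerivAt (fun w : ℂ => w - uj) 1 (x k) :=
      (hasDerivAt_id (x k)).sub_const uj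
    exact h1.div h2 (hne' k)
  have hB : HasDerivAt (fun w : ℂ => (uj - w + c) / (uj - w))
      ((-1 * (uj - x k) - (uj - x k + c) * (-1)) / (uj - x k) ^ 2) (x k) := by
    have h1 : HasDerivAt (fun w : ℂ => uj - w + c) (-1) (x k) :=
      ((hasDerivAt_id (x k)).const_sub uj).add_const c
    have h2 : HasDerivAt (fun w : ℂ => uj - w) (-1) (x k) :=
      (hasDerivAt_id (x k)).const_sub uj
    exact h1.div h2 (hne k)
  have hfun : (fun w : ℂ =>
      l1 * ∏ ℓ, ((Function.update x k w ℓ - uj + c) / (Function.update x k w ℓ - uj))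
      + l2 * ∏ ℓ, ((uj - Function.update x k w ℓ + c) / (uj - Function.update x k w ℓ)))
      = fun w : ℂ => l1 * (((w - uj + c) / (w - uj)) * (B / E))
        + l2 * (((uj - w + c) / (uj - w)) * (A / D)) := by
    funext w
    have e1 : ∏ ℓ, ((Function.update x k w ℓ - uj + c) / (Function.update x k w ℓ - uj))
        = ((w - uj + c) / (w - uj)) * (B / E) := by
      rw [← Finset.mul_prod_erase univ _ (mem_univ k)]
      rw [Function.update_self]
      congr 1
      rw [hBdef, hEdef, ← Finset.prod_div_distrib]
      exact Finset.prod_congr rfl fun ℓ hℓ => by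
        rw [Function.update_of_ne (Finset.mem_erase.mp hℓ).1]
    have e2 : ∏ ℓ, ((uj - Function.update x k w ℓ + c) / (uj - Function.update x k w ℓ))
        = ((uj - w + c) / (uj - w)) * (A / D) := by
      rw [← Finset.mul_prod_erase univ _ (mem_univ k)]
      rw [Function.update_self]
      congr 1
      rw [hAdef, hDdef, ← Finset.prod_div_distrib]
      exact Finset.prod_congr rfl fun ℓ hℓ => by
        rw [Function.update_of_ne (Finset.mem_erase.mp hℓ).1]
    rw [e1, e2]
  have hder : deriv (fun w : ℂ =>
      l1 * ∏ ℓ, ((Function.update x k w ℓ - uj + c) / (Function.update x k w ℓ - uj))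
      + l2 * ∏ ℓ, ((uj - Function.update x k w ℓ + c) / (uj - Function.update x k w ℓ)))
      (x k)
      = l1 * (((1 * (x k - uj) - (x k - uj + c) * 1) / (x k - uj) ^ 2) * (B / E))
        + l2 * (((-1 * (uj - x k) - (uj - x k + c) * (-1)) / (uj - x k) ^ 2) * (A / D)) := by
    rw [hfun]
    exact (((hA.mul_const (B / E)).const_mul l1).add
      ((hB.mul_const (A / D)).const_mul l2)).deriv
  rw [hder]
  -- product rewrites
  have hprod1 : ∏ ℓ, ((uj - x ℓ + c) / c) = ((uj - x k + c) * A) / c ^ n := by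
    rw [Finset.prod_div_distrib, Finset.prod_const, card_univ, Fintype.card_fin,
      ← Finset.mul_prod_erase univ _ (mem_univ k)]
  have hprod2 : ∏ ℓ, ((x ℓ - uj + c) / c) = ((x k - uj + c) * B) / c ^ n := by
    rw [Finset.prod_div_distrib, Finset.prod_const, card_univ, Fintype.card_fin,
      ← Finset.mul_prod_erase univ _ (mem_univ k)]
  have hprodg : ∏ ℓ, (c / (uj - x ℓ)) = c ^ n / ((uj - x k) * D) := by
    rw [Finset.prod_div_distrib, Finset.prod_const, card_univ, Fintype.card_fin,
      ← Finset.mul_prod_erase univ _ (mem_univ k)]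
  have hDE : D = s * E := by
    rw [hDdef, hEdef, hsdef]
    have h1 : ∀ ℓ ∈ univ.erase k, uj - x ℓ = (-1) * (x ℓ - uj) := fun ℓ _ => by ring
    rw [Finset.prod_congr rfl h1, Finset.prod_mul_distrib, Finset.prod_const,
      Finset.card_erase_of_mem (mem_univ k), card_univ, Fintype.card_fin]
  rw [hprod1, hprod2, hprodg]
  have hk1 : uj - x k ≠ 0 := hne k
  have hk2 : x k - uj ≠ 0 := hne' k
  have hk3 : uj - x k + c ≠ 0 := hpc k
  have hk4 : x k - uj + c ≠ 0 := hmc k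
  have hs0 : s ≠ 0 := by rw [hsdef]; exact pow_ne_zero _ (by norm_num)
  have eqA : l2 * (c ^ 2 / ((uj - x k) * (uj - x k + c))) * (((uj - x k + c) * A) / c ^ n)
      = (c / (c ^ n / ((uj - x k) * D))) *
        (l2 * (((-1 * (uj - x k) - (uj - x k + c) * (-1)) / (uj - x k) ^ 2) * (A / D))) := by
    field_simp
    ring
  have eqB : s * l1 * (c ^ 2 / ((x k - uj) * (x k - uj + c))) * (((x k - uj + c) * B) / c ^ n)
      = (c / (c ^ n / ((uj - x k) * D))) *
        (l1 * (((1 * (x k - uj) - (x k - uj + c) * 1) / (x k - uj) ^ 2) * (B / E))) := by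
    rw [hDE]
    field_simp
    ring
  linear_combination eqA + eqB
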